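/- Let X be a metric space equipped with a Borel measure μ and let 1 ≤ p < ∞. Let f : X → ℝ be Borel, and let (f_j) be a sequence of Borel functions on X converging to f in L^p(X,μ), i.e. ∫_X |f_j − f|^p dμ → 0. Then there exist a subsequence (f_{j_k}) and a family Λ of Borel measures on X with M_p(Λ) = 0 such that ∫_X |f_{j_k} − f| dν → 0 as k → ∞ for every Borel measure ν on X not belonging to Λ. -/

import Mathlib

open MeasureTheory Set Filter
open scoped ENNReal

/-- The `p`-modulus (with respect to the reference measure `μ`) of a family `Λ` of
Borel measures: the infimum of `∫ f^p dμ` over Borel `f : X → [0,∞]` with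
`∫ f dν ≥ 1` for every `ν ∈ Λ`. -/
noncomputable def pModulus {X : Type*} [MeasurableSpace X] (μ : Measure X) (p : ℝ)
    (Λ : Set (Measure X)) : ℝ≥0∞ :=
  ⨅ (f : X → ℝ≥0∞) (_ : Measurable f) (_ : ∀ ν ∈ Λ, 1 ≤ ∫⁻ x, f x ∂ν),
    ∫⁻ x, f x ^ p ∂μ

/-- Fuglede's lemma. Let `f` be Borel and let `(f_j)` be a sequence
of Borel functions converging to `f` in `L^p(X,μ)`, `1 ≤ p < ∞`. Then there is a
subsequence `(f_{j_k})` and a family `Λ` of Borel measures with `M_p(Λ) = 0` such that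
`∫ |f_{j_k} - f| dν → 0` for every Borel measure `ν ∉ Λ`. -/
theorem stmt10 {X : Type*} [MetricSpace X] [MeasurableSpace X] [BorelSpace X]
    (μ : Measure X) (p : ℝ) (hp : 1 ≤ p)
    (f : X → ℝ) (hf : Measurable f)
    (fj : ℕ → X → ℝ) (hfj : ∀ j, Measurable (fj j))
    (hconv : Tendsto (fun j => ∫⁻ x, ENNReal.ofReal |fj j x - f x| ^ p ∂μ)
      atTop (nhds 0)) :
    ∃ k : ℕ → ℕ, StrictMono k ∧ ∃ Λ : Set (Measure X), pModulus μ p Λ = 0 ∧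
      ∀ ν : Measure X, ν ∉ Λ →
        Tendsto (fun i => ∫⁻ x, ENNReal.ofReal |fj (k i) x - f x| ∂ν)
          atTop (nhds 0) := by
  have hp0 : (0:ℝ) ≤ p := zero_le_one.trans hp
  have hpp : (0:ℝ) < p := zero_lt_one.trans_le hp
  -- extract a rapidly convergent subsequence
  obtain ⟨k, hk, hkle⟩ : ∃ k : ℕ → ℕ, StrictMono k ∧ ∀ i,
      (∫⁻ x, ENNReal.ofReal |fj (k i) x - f x| ^ p ∂μ) ≤ ((4:ℝ≥0∞)⁻¹ ^ i) ^ p := by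
    apply Filter.extraction_forall_of_eventually
      (P := fun i j => (∫⁻ x, ENNReal.ofReal |fj j x - f x| ^ p ∂μ) ≤ ((4:ℝ≥0∞)⁻¹ ^ i) ^ p)
    intro i
    have hpos : (0:ℝ≥0∞) < ((4:ℝ≥0∞)⁻¹ ^ i) ^ p := by
      apply ENNReal.rpow_pos
      · exact pos_iff_ne_zero.mpr (pow_ne_zero _ (by simp))
      · exact ENNReal.pow_ne_top (by simp)
    obtain ⟨N, hN⟩ := ENNReal.tendsto_atTop_zero.mp hconv _ hpos
    exact Filter.eventually_atTop.mpr ⟨N, hN⟩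
  set H : ℕ → X → ℝ≥0∞ := fun i x => ENNReal.ofReal |fj (k i) x - f x| with hHdef
  have hH : ∀ i, Measurable (H i) := fun i => ((hfj (k i)).sub hf).abs.ennreal_ofReal
  set Λ : Set (Measure X) :=
    {ν : Measure X | ¬ Tendsto (fun i => ∫⁻ x, H i x ∂ν) atTop (nhds 0)} with hΛdef
  refine ⟨k, hk, Λ, ?_, fun ν hν => not_not.mp hν⟩
  -- the admissible test functions
  set g : ℕ → X → ℝ≥0∞ := fun m x => ⨆ n : ℕ, (2:ℝ≥0∞) ^ (m + n) * H (m + n) x with hgdef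
  have hgmeas : ∀ m, Measurable (g m) :=
    fun m => Measurable.iSup fun n => (hH (m + n)).const_mul _
  -- admissibility
  have hadm : ∀ m, ∀ ν ∈ Λ, 1 ≤ ∫⁻ x, g m x ∂ν := by
    intro m ν hν
    rw [hΛdef, Set.mem_setOf_eq, ENNReal.tendsto_atTop_zero] at hν
    push_neg at hν
    obtain ⟨ε, hε0, hεfreq⟩ := hν
    obtain ⟨n₀, hn₀⟩ := ENNReal.exists_inv_two_pow_lt hε0.ne'
    obtain ⟨n, hn, hεn⟩ := hεfreq (max m n₀)
    have hnm : m ≤ n := le_of_max_le_left hn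
    have hnn0 : n₀ ≤ n := le_of_max_le_right hn
    have h2 : (2:ℝ≥0∞)⁻¹ ^ n ≤ 2⁻¹ ^ n₀ :=
      pow_le_pow_of_le_one zero_le (ENNReal.inv_le_one.mpr one_le_two) hnn0
    have h1 : (1:ℝ≥0∞) ≤ 2 ^ n * ε := by
      have hcancel : (2:ℝ≥0∞) ^ n * 2⁻¹ ^ n = 1 := by
        rw [← mul_pow, ENNReal.mul_inv_cancel (by norm_num) (by norm_num), one_pow]
      calc (1:ℝ≥0∞) = 2 ^ n * 2⁻¹ ^ n := hcancel.symm
        _ ≤ 2 ^ n * ε := mul_le_mul_right (h2.trans hn₀.le) _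
    calc (1:ℝ≥0∞) ≤ 2 ^ n * ε := h1
      _ ≤ 2 ^ n * ∫⁻ x, H n x ∂ν := mul_le_mul_right hεn.le _
      _ = ∫⁻ x, 2 ^ n * H n x ∂ν := (lintegral_const_mul _ (hH n)).symm
      _ ≤ ∫⁻ x, g m x ∂ν := by
          refine lintegral_mono fun x => ?_
          have hmn : m + (n - m) = n := by omega
          have := le_iSup (fun j => (2:ℝ≥0∞) ^ (m + j) * H (m + j) x) (n - m)
          rwa [hmn] at this
  -- integral bound for the test functions
  have hbound : ∀ m, (∫⁻ x, g m x ^ p ∂μ) ≤ (2:ℝ≥0∞)⁻¹ ^ m * 2 := by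
    intro m
    have h1 : ∀ x, g m x ^ p ≤ ∑' n : ℕ, ((2:ℝ≥0∞) ^ (m + n) * H (m + n) x) ^ p := by
      intro x
      have hiso : (⨆ n : ℕ, (2:ℝ≥0∞) ^ (m + n) * H (m + n) x) ^ p
          = ⨆ n : ℕ, ((2:ℝ≥0∞) ^ (m + n) * H (m + n) x) ^ p := by
        have h := (ENNReal.orderIsoRpow p hpp).map_iSup
          (fun n : ℕ => (2:ℝ≥0∞) ^ (m + n) * H (m + n) x)
        simp only [ENNReal.orderIsoRpow_apply] at h
        exact h
      calc g m x ^ p = ⨆ n : ℕ, ((2:ℝ≥0∞) ^ (m + n) * H (m + n) x) ^ p := hiso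
        _ ≤ ∑' n : ℕ, ((2:ℝ≥0∞) ^ (m + n) * H (m + n) x) ^ p :=
            iSup_le fun n => ENNReal.le_tsum n
    have h24 : (2:ℝ≥0∞) * 4⁻¹ = 2⁻¹ := by
      rw [show (4:ℝ≥0∞) = 2 * 2 by norm_num,
        ENNReal.mul_inv (Or.inl (by norm_num)) (Or.inl (by norm_num)), ← mul_assoc,
        ENNReal.mul_inv_cancel (by norm_num) (by norm_num), one_mul]
    calc ∫⁻ x, g m x ^ p ∂μ
        ≤ ∫⁻ x, ∑' n : ℕ, ((2:ℝ≥0∞) ^ (m + n) * H (m + n) x) ^ p ∂μ := lintegral_mono h1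
      _ = ∑' n : ℕ, ∫⁻ x, ((2:ℝ≥0∞) ^ (m + n) * H (m + n) x) ^ p ∂μ :=
          lintegral_tsum fun n =>
            (((hH (m + n)).const_mul _).pow_const p).aemeasurable
      _ ≤ ∑' n : ℕ, (2:ℝ≥0∞)⁻¹ ^ (m + n) := by
          refine ENNReal.tsum_le_tsum fun n => ?_
          calc ∫⁻ x, ((2:ℝ≥0∞) ^ (m + n) * H (m + n) x) ^ p ∂μ
              = ((2:ℝ≥0∞) ^ (m + n)) ^ p * ∫⁻ x, H (m + n) x ^ p ∂μ := by
                simp_rw [ENNReal.mul_rpow_of_nonneg _ _ hp0]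
                exact lintegral_const_mul _ ((hH (m + n)).pow_const p)
            _ ≤ ((2:ℝ≥0∞) ^ (m + n)) ^ p * ((4:ℝ≥0∞)⁻¹ ^ (m + n)) ^ p :=
                mul_le_mul_right (hkle (m + n)) _
            _ = (((2:ℝ≥0∞) ^ (m + n)) * (4⁻¹ ^ (m + n))) ^ p :=
                (ENNReal.mul_rpow_of_nonneg _ _ hp0).symm
            _ = ((2:ℝ≥0∞)⁻¹ ^ (m + n)) ^ p := by rw [← mul_pow, h24]
            _ ≤ (2:ℝ≥0∞)⁻¹ ^ (m + n) :=
                ENNReal.rpow_le_self_of_le_one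
                  (pow_le_one₀ zero_le (ENNReal.inv_le_one.mpr one_le_two)) hp
      _ = (2:ℝ≥0∞)⁻¹ ^ m * 2 := by
          simp_rw [pow_add]
          rw [ENNReal.tsum_mul_left, ENNReal.tsum_geometric, ENNReal.one_sub_inv_two, inv_inv]
  -- conclude: the modulus is zero
  have hle : ∀ m, pModulus μ p Λ ≤ (2:ℝ≥0∞)⁻¹ ^ m * 2 := fun m =>
    le_trans (iInf_le_of_le (g m) (iInf_le_of_le (hgmeas m) (iInf_le _ (hadm m)))) (hbound m)
  have htend : Tendsto (fun m : ℕ => (2:ℝ≥0∞)⁻¹ ^ m * 2) atTop (nhds 0) := by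
    have h0 : Tendsto (fun m : ℕ => (2:ℝ≥0∞)⁻¹ ^ m) atTop (nhds 0) :=
      ENNReal.tendsto_pow_atTop_nhds_zero_of_lt_one (ENNReal.inv_lt_one.mpr (by norm_num))
    simpa using ENNReal.Tendsto.mul_const h0 (Or.inr (by norm_num))
  exact le_antisymm (ge_of_tendsto' htend hle) zero_le
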